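/- Let T be a p×p real matrix every eigenvalue of which, viewed over ℂ, has strictly negative real part; let e be the all-ones vector in ℝ^p, t := −T e, and π ∈ ℝ^p. Then for every u ≥ 0 and every n ∈ ℕ, ∫₀^∞ zⁿ e^{−uz} · (π·(exp(zT) t)) dz = n! · π·(((u·I − T)⁻¹)^{n+1} t). (In particular, the shared phase-type frailty likelihood with κ uncensored observations equals κ! π (sI − T)^{−(κ+1)} t with s the sum of the cumulative hazards, and the expectations needed in the E-step are ratios of such quantities.) -/

import Mathlib

open Matrix MeasureTheory

section PhaseAux

open NormedSpace Filter Finset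

variable {p : ℕ}

/-- The continuous linear map `B ↦ B *ᵥ v`. -/
noncomputable def mulVecRightCLM (𝕜 : Type*) [RCLike 𝕜] {p : ℕ} (v : Fin p → 𝕜) :
    Matrix (Fin p) (Fin p) 𝕜 →L[𝕜] (Fin p → 𝕜) := by
  letI : NormedAddCommGroup (Matrix (Fin p) (Fin p) 𝕜) := Matrix.linftyOpNormedAddCommGroup
  letI : NormedSpace 𝕜 (Matrix (Fin p) (Fin p) 𝕜) := Matrix.linftyOpNormedSpace
  exact LinearMap.toContinuousLinearMap
    { toFun := fun B => B *ᵥ v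
      map_add' := fun B C => Matrix.add_mulVec B C v
      map_smul' := fun c B => Matrix.smul_mulVec c B v }

@[simp] lemma mulVecRightCLM_apply {𝕜 : Type*} [RCLike 𝕜] {p : ℕ} (v : Fin p → 𝕜)
    (B : Matrix (Fin p) (Fin p) 𝕜) : mulVecRightCLM 𝕜 v B = B *ᵥ v := rfl

lemma exp_scalar_smul_one {𝕜 : Type*} [RCLike 𝕜] {p : ℕ} (c : 𝕜) :
    exp (c • (1 : Matrix (Fin p) (Fin p) 𝕜)) = exp c • (1 : Matrix (Fin p) (Fin p) 𝕜) := by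
  letI : NormedRing (Matrix (Fin p) (Fin p) 𝕜) := Matrix.linftyOpNormedRing
  letI : NormedAlgebra 𝕜 (Matrix (Fin p) (Fin p) 𝕜) := Matrix.linftyOpNormedAlgebra
  calc exp (c • (1 : Matrix (Fin p) (Fin p) 𝕜))
      = exp (algebraMap 𝕜 (Matrix (Fin p) (Fin p) 𝕜) c) := by
        rw [Algebra.algebraMap_eq_smul_one]
    _ = algebraMap 𝕜 (Matrix (Fin p) (Fin p) 𝕜) (exp c) :=
        (map_exp (algebraMap 𝕜 (Matrix (Fin p) (Fin p) 𝕜))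
          (algebraMapCLM 𝕜 (Matrix (Fin p) (Fin p) 𝕜)).continuous c).symm
    _ = exp c • (1 : Matrix (Fin p) (Fin p) 𝕜) := Algebra.algebraMap_eq_smul_one _

/-- Exponential applied to a generalized eigenvector. -/
lemma exp_smul_mulVec_genEig (M : Matrix (Fin p) (Fin p) ℂ) (μ : ℂ) (k : ℕ)
    (v : Fin p → ℂ) (hv : ((M - μ • 1) ^ k) *ᵥ v = 0) (z : ℂ) :
    exp (z • M) *ᵥ v
      = Complex.exp (z * μ) •
          ∑ j ∈ Finset.range k,
            ((j.factorial : ℂ)⁻¹ • z ^ j • (((M - μ • 1) ^ j) *ᵥ v)) := by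
  set N := M - μ • (1 : Matrix (Fin p) (Fin p) ℂ) with hN
  have hsplit : z • M = (z * μ) • (1 : Matrix (Fin p) (Fin p) ℂ) + z • N := by
    rw [hN, smul_sub, smul_smul]
    abel
  have hcomm : Commute ((z * μ) • (1 : Matrix (Fin p) (Fin p) ℂ)) (z • N) :=
    (Commute.one_left (z • N)).smul_left _
  rw [hsplit, Matrix.exp_add_of_commute _ _ hcomm, exp_scalar_smul_one,
    ← Complex.exp_eq_exp_ℂ, smul_mul_assoc, one_mul, Matrix.smul_mulVec]
  congr 1
  have hst : Summable (fun m : ℕ => ((m.factorial : ℂ))⁻¹ • (z • N) ^ m) := by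
    letI : NormedRing (Matrix (Fin p) (Fin p) ℂ) := Matrix.linftyOpNormedRing
    letI : NormedAlgebra ℂ (Matrix (Fin p) (Fin p) ℂ) := Matrix.linftyOpNormedAlgebra
    exact expSeries_summable' (𝕂 := ℂ) (z • N)
  have hexptsum : exp (z • N) = ∑' m : ℕ, ((m.factorial : ℂ))⁻¹ • (z • N) ^ m := by
    letI : NormedRing (Matrix (Fin p) (Fin p) ℂ) := Matrix.linftyOpNormedRing
    letI : NormedAlgebra ℂ (Matrix (Fin p) (Fin p) ℂ) := Matrix.linftyOpNormedAlgebra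
    exact congrFun (exp_eq_tsum (𝕂 := ℂ)) (z • N)
  have h0 : exp (z • N) *ᵥ v = ∑' m : ℕ, (((m.factorial : ℂ)⁻¹ • ((z • N) ^ m)) *ᵥ v) := by
    rw [hexptsum]
    exact (mulVecRightCLM ℂ v).map_tsum hst
  have hterm : ∀ m : ℕ, ((m.factorial : ℂ)⁻¹ • ((z • N) ^ m)) *ᵥ v
      = (m.factorial : ℂ)⁻¹ • z ^ m • ((N ^ m) *ᵥ v) := by
    intro m
    rw [smul_pow, Matrix.smul_mulVec, Matrix.smul_mulVec]
  rw [h0, tsum_eq_sum (s := Finset.range k) ?_]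
  · exact Finset.sum_congr rfl fun j _ => hterm j
  · intro m hm
    have hk : k ≤ m := by simpa using hm
    have hz : (N ^ m) *ᵥ v = 0 := by
      rw [← Nat.sub_add_cancel hk, pow_add, ← Matrix.mulVec_mulVec, hv, Matrix.mulVec_zero]
    rw [hterm, hz, smul_zero, smul_zero]

lemma norm_exp_smul_mulVec_genEig_le (M : Matrix (Fin p) (Fin p) ℂ) (μ : ℂ) (k : ℕ)
    (v : Fin p → ℂ) (hv : ((M - μ • 1) ^ k) *ᵥ v = 0) (z : ℝ) (hz : 0 ≤ z) :
    ‖exp ((z : ℂ) • M) *ᵥ v‖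
      ≤ (∑ j ∈ Finset.range k, ‖((M - μ • 1) ^ j) *ᵥ v‖) * (1 + z) ^ k
          * Real.exp (μ.re * z) := by
  rw [exp_smul_mulVec_genEig M μ k v hv, norm_smul]
  have hE : ‖Complex.exp ((z : ℂ) * μ)‖ = Real.exp (μ.re * z) := by
    rw [Complex.norm_exp]
    congr 1
    simp [Complex.mul_re, mul_comm]
  rw [hE, mul_comm _ (Real.exp (μ.re * z))]
  refine mul_le_mul_of_nonneg_left ?_ (Real.exp_pos _).le
  rw [Finset.sum_mul]
  refine (norm_sum_le _ _).trans (Finset.sum_le_sum fun j hj => ?_)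
  rw [norm_smul, norm_smul, norm_inv, norm_pow]
  have hz1 : (1 : ℝ) ≤ 1 + z := by linarith
  have h1 : ‖((j.factorial : ℂ))‖⁻¹ ≤ 1 := by
    rw [inv_le_one_iff₀]
    right
    rw [Complex.norm_natCast]
    exact_mod_cast j.factorial_pos
  have h2 : ‖(z : ℂ)‖ ^ j ≤ (1 + z) ^ k := by
    rw [Complex.norm_real, Real.norm_eq_abs, abs_of_nonneg hz]
    calc z ^ j ≤ (1 + z) ^ j := pow_le_pow_left₀ hz (by linarith) j
      _ ≤ (1 + z) ^ k := pow_le_pow_right₀ hz1 (Finset.mem_range.mp hj).le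
  calc ‖((j.factorial : ℂ))‖⁻¹ * (‖(z : ℂ)‖ ^ j * ‖((M - μ • 1) ^ j) *ᵥ v‖)
      ≤ 1 * ((1 + z) ^ k * ‖((M - μ • 1) ^ j) *ᵥ v‖) := by
        refine mul_le_mul h1 (mul_le_mul_of_nonneg_right h2 (norm_nonneg _)) (by positivity) one_pos.le
    _ = ‖((M - μ • 1) ^ j) *ᵥ v‖ * (1 + z) ^ k := by ring

/-- Decay bound on `exp (z • M) *ᵥ x` when all eigenvalues have negative real part. -/
lemma exists_decay_complex (M : Matrix (Fin p) (Fin p) ℂ)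
    (hM : ∀ μ ∈ spectrum ℂ M, μ.re < 0) (x : Fin p → ℂ) :
    ∃ C : ℝ, ∃ ε : ℝ, ∃ q : ℕ, 0 < ε ∧ 0 ≤ C ∧ ∀ z : ℝ, 0 ≤ z →
      ‖exp ((z : ℂ) • M) *ᵥ x‖ ≤ C * (1 + z) ^ q * Real.exp (-(ε * z)) := by
  classical
  set f : Module.End ℂ (Fin p → ℂ) := Matrix.toLinAlgEquiv' M with hf
  have htop := Module.End.iSup_maxGenEigenspace_eq_top f
  have hx : x ∈ ⨆ μ : ℂ, f.maxGenEigenspace μ := htop ▸ Submodule.mem_top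
  rw [Submodule.mem_iSup_iff_exists_finsupp] at hx
  obtain ⟨c, hc, hcsum⟩ := hx
  set d := Module.finrank ℂ (Fin p → ℂ) with hd
  have hker : ∀ μ, ((M - μ • 1) ^ d) *ᵥ (c μ) = 0 := by
    intro μ
    have h1 : c μ ∈ f.genEigenspace μ (d : ℕ∞) := by
      rw [← Module.End.maxGenEigenspace_eq_genEigenspace_finrank]
      exact hc μ
    rw [Module.End.mem_genEigenspace_nat, LinearMap.mem_ker] at h1
    have h3 : Matrix.toLinAlgEquiv' (μ • (1 : Matrix (Fin p) (Fin p) ℂ))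
        = μ • (1 : Module.End ℂ (Fin p → ℂ)) := by
      rw [← Algebra.algebraMap_eq_smul_one, AlgEquiv.commutes, Algebra.algebraMap_eq_smul_one]
    have h2 : Matrix.toLinAlgEquiv' ((M - μ • 1) ^ d) = (f - μ • 1) ^ d := by
      rw [map_pow, map_sub, h3, ← hf]
    rw [← h2, Matrix.toLinAlgEquiv'_apply] at h1
    exact h1
  have hmem : ∀ μ, c μ ∈ f.genEigenspace μ (d : ℕ∞) := by
    intro μ
    rw [← Module.End.maxGenEigenspace_eq_genEigenspace_finrank]
    exact hc μ
  have hspec : ∀ μ ∈ c.support, μ.re < 0 := by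
    intro μ hμ
    have hμ0 : c μ ≠ 0 := Finsupp.mem_support_iff.mp hμ
    apply hM
    rw [← AlgEquiv.spectrum_eq (Matrix.toLinAlgEquiv' :
      Matrix (Fin p) (Fin p) ℂ ≃ₐ[ℂ] Module.End ℂ (Fin p → ℂ)) M,
      ← Module.End.hasEigenvalue_iff_mem_spectrum]
    refine Module.End.hasEigenvalue_of_hasGenEigenvalue (k := d) ?_
    rw [Module.End.hasGenEigenvalue_iff]
    intro hbot
    apply hμ0
    have h1 := hmem μ
    rw [show ((d : ℕ) : ℕ∞) = (d : ℕ∞) from rfl] at h1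
    rw [hbot] at h1
    simpa using h1
  have hsumx : ∑ μ ∈ c.support, c μ = x := by
    rw [← hcsum]; rfl
  by_cases hs : c.support.Nonempty
  · set ε := c.support.inf' hs fun μ => -μ.re with hε'
    have hε : 0 < ε := by
      rw [hε', Finset.lt_inf'_iff]
      intro μ hμ
      linarith [hspec μ hμ]
    set C := ∑ μ ∈ c.support, (∑ j ∈ Finset.range d, ‖((M - μ • 1) ^ j) *ᵥ (c μ)‖) with hC
    have hC0 : 0 ≤ C :=
      Finset.sum_nonneg fun _ _ => Finset.sum_nonneg fun _ _ => norm_nonneg _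
    refine ⟨C, ε, d, hε, hC0, fun z hz => ?_⟩
    have hdecomp : exp ((z : ℂ) • M) *ᵥ x
        = ∑ μ ∈ c.support, exp ((z : ℂ) • M) *ᵥ (c μ) := by
      rw [← hsumx]
      simpa only [Matrix.mulVecLin_apply] using
        map_sum ((exp ((z : ℂ) • M)).mulVecLin) (fun μ => c μ) c.support
    rw [hdecomp, hC, Finset.sum_mul, Finset.sum_mul]
    refine (norm_sum_le _ _).trans (Finset.sum_le_sum fun μ hμ => ?_)
    have hb := norm_exp_smul_mulVec_genEig_le M μ d (c μ) (hker μ) z hz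
    refine hb.trans ?_
    rw [mul_assoc, mul_assoc]
    refine mul_le_mul_of_nonneg_left ?_
      (Finset.sum_nonneg fun _ _ => norm_nonneg _)
    refine mul_le_mul_of_nonneg_left ?_ (by positivity)
    apply Real.exp_le_exp.mpr
    have hle : ε ≤ -μ.re := Finset.inf'_le _ hμ
    nlinarith [hz]
  · refine ⟨0, 1, 0, one_pos, le_rfl, fun z hz => ?_⟩
    have hc0 : c = 0 := Finsupp.support_eq_empty.mp (Finset.not_nonempty_iff_eq_empty.mp hs)
    have hx0 : x = 0 := by
      rw [← hsumx, hc0]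
      simp
    simp [hx0, Matrix.mulVec_zero]

/-- Real version of the decay bound. -/
lemma exists_decay_real (A : Matrix (Fin p) (Fin p) ℝ)
    (hA : ∀ μ ∈ spectrum ℂ (A.map (algebraMap ℝ ℂ)), μ.re < 0) (x : Fin p → ℝ) :
    ∃ C : ℝ, ∃ ε : ℝ, ∃ q : ℕ, 0 < ε ∧ 0 ≤ C ∧ ∀ z : ℝ, 0 ≤ z →
      ‖exp (z • A) *ᵥ x‖ ≤ C * (1 + z) ^ q * Real.exp (-(ε * z)) := by
  obtain ⟨C, ε, q, hε, hC, hbound⟩ :=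
    exists_decay_complex (A.map (algebraMap ℝ ℂ)) hA (fun i => (x i : ℂ))
  refine ⟨C, ε, q, hε, hC, fun z hz => ?_⟩
  have hmap : (exp (z • A)).map (algebraMap ℝ ℂ)
      = exp ((z : ℂ) • A.map (algebraMap ℝ ℂ)) := by
    have hcont : Continuous fun B : Matrix (Fin p) (Fin p) ℝ =>
        ((algebraMap ℝ ℂ).mapMatrix : Matrix (Fin p) (Fin p) ℝ →+* Matrix (Fin p) (Fin p) ℂ) B :=
      continuous_id.matrix_map Complex.continuous_ofReal
    have h1 : (exp (z • A)).map (algebraMap ℝ ℂ)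
        = exp ((z • A).map (algebraMap ℝ ℂ)) := by
      letI : NormedRing (Matrix (Fin p) (Fin p) ℝ) := Matrix.linftyOpNormedRing
      letI : NormedAlgebra ℝ (Matrix (Fin p) (Fin p) ℝ) := Matrix.linftyOpNormedAlgebra
      letI : NormedRing (Matrix (Fin p) (Fin p) ℂ) := Matrix.linftyOpNormedRing
      letI : NormedAlgebra ℝ (Matrix (Fin p) (Fin p) ℂ) := Matrix.linftyOpNormedAlgebra
      letI : NormedAlgebra ℚ (Matrix (Fin p) (Fin p) ℝ) := Matrix.linftyOpNormedAlgebra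
      letI : NormedAlgebra ℚ (Matrix (Fin p) (Fin p) ℂ) := Matrix.linftyOpNormedAlgebra
      exact map_exp ((algebraMap ℝ ℂ).mapMatrix :
        Matrix (Fin p) (Fin p) ℝ →+* Matrix (Fin p) (Fin p) ℂ) hcont (z • A)
    have h2 : (z • A).map (algebraMap ℝ ℂ) = (z : ℂ) • A.map (algebraMap ℝ ℂ) := by
      ext i j
      simp [Matrix.map_apply, Complex.real_smul]
    have h3 : (exp : Matrix (Fin p) (Fin p) ℂ → Matrix (Fin p) (Fin p) ℂ) = exp := by
      letI : NormedRing (Matrix (Fin p) (Fin p) ℂ) := Matrix.linftyOpNormedRing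
      letI : NormedAlgebra ℝ (Matrix (Fin p) (Fin p) ℂ) := Matrix.linftyOpNormedAlgebra
      letI : NormedAlgebra ℂ (Matrix (Fin p) (Fin p) ℂ) := Matrix.linftyOpNormedAlgebra
      rfl
    rw [h1, h2]
  have hkey : ∀ i, ((exp (z • A) *ᵥ x) i : ℂ)
      = (exp ((z : ℂ) • A.map (algebraMap ℝ ℂ)) *ᵥ fun j => (x j : ℂ)) i := by
    intro i
    have h4 := RingHom.map_mulVec (algebraMap ℝ ℂ) (exp (z • A)) x i
    rw [hmap] at h4
    rw [show ((((exp (z • A)) *ᵥ x) i : ℝ) : ℂ)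
      = algebraMap ℝ ℂ ((exp (z • A) *ᵥ x) i) from rfl, h4]
    rfl
  have hrhs : 0 ≤ C * (1 + z) ^ q * Real.exp (-(ε * z)) := by positivity
  rw [pi_norm_le_iff_of_nonneg hrhs]
  intro i
  calc ‖(exp (z • A) *ᵥ x) i‖
      = ‖((exp (z • A) *ᵥ x) i : ℂ)‖ := (Complex.norm_real _).symm
    _ = ‖(exp ((z : ℂ) • A.map (algebraMap ℝ ℂ)) *ᵥ fun j => (x j : ℂ)) i‖ := by rw [hkey i]
    _ ≤ ‖exp ((z : ℂ) • A.map (algebraMap ℝ ℂ)) *ᵥ fun j => (x j : ℂ)‖ :=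
        norm_le_pi_norm _ i
    _ ≤ C * (1 + z) ^ q * Real.exp (-(ε * z)) := hbound z hz

set_option maxHeartbeats 1000000 in
lemma hasDerivAt_dot_exp (A : Matrix (Fin p) (Fin p) ℝ) (w x : Fin p → ℝ) (z : ℝ) :
    HasDerivAt (fun z : ℝ => w ⬝ᵥ (exp (z • A) *ᵥ x))
      (w ⬝ᵥ (exp (z • A) *ᵥ (A *ᵥ x))) z := by
  letI : NormedRing (Matrix (Fin p) (Fin p) ℝ) := Matrix.linftyOpNormedRing
  letI : NormedAlgebra ℝ (Matrix (Fin p) (Fin p) ℝ) := Matrix.linftyOpNormedAlgebra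
  letI : NormedAlgebra ℚ (Matrix (Fin p) (Fin p) ℝ) := Matrix.linftyOpNormedAlgebra
  let L : Matrix (Fin p) (Fin p) ℝ →L[ℝ] ℝ :=
    LinearMap.toContinuousLinearMap
      { toFun := fun B => w ⬝ᵥ (B *ᵥ x)
        map_add' := fun B C => by simp [Matrix.add_mulVec, dotProduct_add]
        map_smul' := fun c B => by simp [Matrix.smul_mulVec, dotProduct_smul] }
  have h := hasDerivAt_exp_smul_const (𝕂 := ℝ) A z
  have h2 := L.hasFDerivAt.comp_hasDerivAt z h
  have h3 : L (exp (z • A) * A) = w ⬝ᵥ (exp (z • A) *ᵥ (A *ᵥ x)) := by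
    show w ⬝ᵥ ((exp (z • A) * A) *ᵥ x) = _
    rw [← Matrix.mulVec_mulVec]
  exact h2.congr_deriv h3

set_option maxHeartbeats 1000000 in
lemma continuous_dot_exp (A : Matrix (Fin p) (Fin p) ℝ) (w x : Fin p → ℝ) :
    Continuous (fun z : ℝ => w ⬝ᵥ (exp (z • A) *ᵥ x)) := by
  letI : NormedRing (Matrix (Fin p) (Fin p) ℝ) := Matrix.linftyOpNormedRing
  letI : NormedAlgebra ℝ (Matrix (Fin p) (Fin p) ℝ) := Matrix.linftyOpNormedAlgebra
  letI : NormedAlgebra ℚ (Matrix (Fin p) (Fin p) ℝ) := Matrix.linftyOpNormedAlgebra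
  let L : Matrix (Fin p) (Fin p) ℝ →L[ℝ] ℝ :=
    LinearMap.toContinuousLinearMap
      { toFun := fun B => w ⬝ᵥ (B *ᵥ x)
        map_add' := fun B C => by simp [Matrix.add_mulVec, dotProduct_add]
        map_smul' := fun c B => by simp [Matrix.smul_mulVec, dotProduct_smul] }
  exact L.continuous.comp (exp_continuous.comp (continuous_id.smul continuous_const))

end PhaseAux

section RealAux

open Filter

lemma integrableOn_pow_mul_exp_neg (m : ℕ) {ε : ℝ} (hε : 0 < ε) :
    IntegrableOn (fun z : ℝ => z ^ m * Real.exp (-(ε * z))) (Set.Ioi 0) := by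
  have h := integrableOn_rpow_mul_exp_neg_mul_rpow (s := (m : ℝ)) (p := 1) (b := ε)
    (by exact_mod_cast neg_one_lt_zero.trans_le (Nat.cast_nonneg m)) zero_lt_one hε
  simpa [Real.rpow_natCast, Real.rpow_one, neg_mul] using h

lemma integrableOn_shape (n q : ℕ) {ε : ℝ} (hε : 0 < ε) :
    IntegrableOn (fun z : ℝ => z ^ n * (1 + z) ^ q * Real.exp (-(ε * z))) (Set.Ioi 0) := by
  have hint : IntegrableOn (fun z : ℝ => ∑ j ∈ Finset.range (n + q + 1),
      (((n + q).choose j : ℝ) * (z ^ j * Real.exp (-(ε * z))))) (Set.Ioi 0) := by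
    apply integrable_finset_sum
    intro j _
    exact (integrableOn_pow_mul_exp_neg j hε).const_mul _
  refine hint.mono' ?_ ?_
  · exact (((continuous_pow n).mul ((continuous_const.add continuous_id).pow q)).mul
      (Real.continuous_exp.comp (continuous_const.mul continuous_id).neg)).aestronglyMeasurable.restrict
  · filter_upwards [ae_restrict_mem measurableSet_Ioi] with z hz
    have hz0 : (0 : ℝ) ≤ z := le_of_lt hz
    have h1 : z ^ n * (1 + z) ^ q ≤ (1 + z) ^ (n + q) := by
      rw [pow_add]
      have : z ^ n ≤ (1 + z) ^ n := pow_le_pow_left₀ hz0 (by linarith) n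
      exact mul_le_mul_of_nonneg_right this (by positivity)
    calc ‖z ^ n * (1 + z) ^ q * Real.exp (-(ε * z))‖
        = z ^ n * (1 + z) ^ q * Real.exp (-(ε * z)) := by
          rw [Real.norm_eq_abs, abs_of_nonneg (by positivity)]
      _ ≤ (1 + z) ^ (n + q) * Real.exp (-(ε * z)) :=
          mul_le_mul_of_nonneg_right h1 (Real.exp_pos _).le
      _ = ∑ j ∈ Finset.range (n + q + 1),
            (((n + q).choose j : ℝ) * (z ^ j * Real.exp (-(ε * z)))) := by
          rw [add_comm (1 : ℝ) z, add_pow, Finset.sum_mul]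
          refine Finset.sum_congr rfl fun j _ => ?_
          rw [one_pow]
          ring

lemma tendsto_pow_mul_exp_neg_mul (m : ℕ) {ε : ℝ} (hε : 0 < ε) :
    Tendsto (fun z : ℝ => z ^ m * Real.exp (-(ε * z))) atTop (nhds 0) := by
  have h0 : Tendsto (fun x : ℝ => x ^ m * Real.exp (-x)) atTop (nhds 0) :=
    Real.tendsto_pow_mul_exp_neg_atTop_nhds_zero m
  have hmul : Tendsto (fun z : ℝ => ε * z) atTop atTop :=
    Tendsto.const_mul_atTop hε tendsto_id
  have h1 := (h0.comp hmul).const_mul ((ε ^ m)⁻¹)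
  rw [mul_zero] at h1
  refine h1.congr fun z => ?_
  simp only [Function.comp_apply]
  rw [mul_pow, ← mul_assoc, ← mul_assoc, inv_mul_cancel₀ (pow_ne_zero m hε.ne'), one_mul]

lemma tendsto_shape (M : ℕ) {ε : ℝ} (hε : 0 < ε) :
    Tendsto (fun z : ℝ => (1 + z) ^ M * Real.exp (-(ε * z))) atTop (nhds 0) := by
  have h1 := tendsto_pow_mul_exp_neg_mul M hε
  have h2 : Tendsto (fun z : ℝ => 1 + z) atTop atTop :=
    tendsto_atTop_add_const_left _ 1 tendsto_id
  have h3 := (h1.comp h2).const_mul (Real.exp ε)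
  rw [mul_zero] at h3
  refine h3.congr fun z => ?_
  simp only [Function.comp_apply]
  rw [mul_comm (Real.exp ε), mul_assoc, ← Real.exp_add]
  have : -(ε * (1 + z)) + ε = -(ε * z) := by ring
  rw [this]

end RealAux

/-- For a phase-type density `f_Z(z) = π exp(Tz) t`, for every `u ≥ 0` and `n ∈ ℕ`,
`∫₀^∞ zⁿ e^{-uz} π exp(zT) t dz = n! π ((uI - T)⁻¹)^{n+1} t`. -/
theorem phaseType_weighted_moment {p : ℕ} (T : Matrix (Fin p) (Fin p) ℝ)
    (hT : ∀ μ ∈ spectrum ℂ (T.map (algebraMap ℝ ℂ)), μ.re < 0)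
    (e : Fin p → ℝ) (he : e = fun _ => 1) (t : Fin p → ℝ) (ht : t = (-T) *ᵥ e)
    (π : Fin p → ℝ) :
    ∀ u : ℝ, 0 ≤ u → ∀ n : ℕ,
      ∫ z in Set.Ioi (0 : ℝ),
          z ^ n * Real.exp (-(u * z)) * (π ⬝ᵥ (NormedSpace.exp (z • T) *ᵥ t)) =
        (n.factorial : ℝ) *
          (π ⬝ᵥ (((u • (1 : Matrix (Fin p) (Fin p) ℝ) - T)⁻¹) ^ (n + 1) *ᵥ t)) := by
  intro u hu n
  classical
  set A : Matrix (Fin p) (Fin p) ℝ := T - u • 1 with hA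
  have hmapA : A.map (algebraMap ℝ ℂ)
      = T.map (algebraMap ℝ ℂ) - algebraMap ℂ (Matrix (Fin p) (Fin p) ℂ) (u : ℂ) := by
    rw [Algebra.algebraMap_eq_smul_one]
    ext i j
    by_cases h : i = j <;>
      simp [hA, Matrix.map_apply, Matrix.sub_apply, Matrix.smul_apply, Matrix.one_apply, h]
  have hAspec : ∀ μ ∈ spectrum ℂ (A.map (algebraMap ℝ ℂ)), μ.re < 0 := by
    intro μ hμ
    rw [hmapA, ← spectrum.sub_singleton_eq] at hμ
    obtain ⟨a, ha, b, hb, rfl⟩ := Set.mem_sub.mp hμ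
    rw [Set.mem_singleton_iff] at hb
    subst hb
    have h1 := hT a ha
    have h2 : ((u : ℂ)).re = u := Complex.ofReal_re u
    simp only [Complex.sub_re, h2]
    linarith
  have hdet : IsUnit A.det := by
    have h0 : (0 : ℂ) ∉ spectrum ℂ (A.map (algebraMap ℝ ℂ)) := fun h => by
      simpa using hAspec 0 h
    have hunitC : IsUnit (A.map (algebraMap ℝ ℂ)) := (spectrum.zero_notMem_iff ℂ).mp h0
    rw [Matrix.isUnit_iff_isUnit_det] at hunitC
    have hdet2 : ((algebraMap ℝ ℂ).mapMatrix A).det = algebraMap ℝ ℂ A.det :=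
      (RingHom.map_det _ A).symm
    have hunitC' : IsUnit (algebraMap ℝ ℂ A.det) := by
      rw [← hdet2]
      exact hunitC
    rw [isUnit_iff_ne_zero] at hunitC'
    have hd : A.det ≠ 0 := fun h => hunitC' (by simp [h])
    exact hd.isUnit
  have hAinv : A * A⁻¹ = 1 := Matrix.mul_nonsing_inv A hdet
  have hAapply : ∀ y : Fin p → ℝ, A *ᵥ (A⁻¹ *ᵥ y) = y := fun y => by
    rw [Matrix.mulVec_mulVec, hAinv, Matrix.one_mulVec]
  have hneg : (-A)⁻¹ = -(A⁻¹) := Matrix.inv_eq_right_inv (by rw [neg_mul_neg, hAinv])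
  have hCπ0 : (0 : ℝ) ≤ ∑ i, ‖π i‖ := Finset.sum_nonneg fun _ _ => norm_nonneg _
  have hdot : ∀ v : Fin p → ℝ, ‖π ⬝ᵥ v‖ ≤ (∑ i, ‖π i‖) * ‖v‖ := by
    intro v
    refine (norm_sum_le _ _).trans ?_
    rw [Finset.sum_mul]
    refine Finset.sum_le_sum fun i _ => ?_
    rw [norm_mul]
    exact mul_le_mul_of_nonneg_left (norm_le_pi_norm _ i) (norm_nonneg _)
  have hInt : ∀ (m : ℕ) (x : Fin p → ℝ), IntegrableOn
      (fun z : ℝ => z ^ m * (π ⬝ᵥ (NormedSpace.exp (z • A) *ᵥ x))) (Set.Ioi 0) := by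
    intro m x
    obtain ⟨C, ε, q, hε, hC, hb⟩ := exists_decay_real A hAspec x
    refine ((integrableOn_shape m q hε).const_mul ((∑ i, ‖π i‖) * C)).mono' ?_ ?_
    · exact ((continuous_pow m).mul (continuous_dot_exp A π x)).aestronglyMeasurable.restrict
    · filter_upwards [ae_restrict_mem measurableSet_Ioi] with z hz
      have hz0 : (0 : ℝ) ≤ z := le_of_lt hz
      calc ‖z ^ m * (π ⬝ᵥ (NormedSpace.exp (z • A) *ᵥ x))‖
          = z ^ m * ‖π ⬝ᵥ (NormedSpace.exp (z • A) *ᵥ x)‖ := by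
            rw [norm_mul, Real.norm_of_nonneg (pow_nonneg hz0 m)]
        _ ≤ z ^ m * ((∑ i, ‖π i‖) * (C * (1 + z) ^ q * Real.exp (-(ε * z)))) := by
            refine mul_le_mul_of_nonneg_left ?_ (pow_nonneg hz0 m)
            exact (hdot _).trans (mul_le_mul_of_nonneg_left (hb z hz0) hCπ0)
        _ = (∑ i, ‖π i‖) * C * (z ^ m * (1 + z) ^ q * Real.exp (-(ε * z))) := by ring
  have hTend : ∀ (m : ℕ) (x : Fin p → ℝ), Filter.Tendsto
      (fun z : ℝ => z ^ m * (π ⬝ᵥ (NormedSpace.exp (z • A) *ᵥ x)))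
      Filter.atTop (nhds 0) := by
    intro m x
    obtain ⟨C, ε, q, hε, hC, hb⟩ := exists_decay_real A hAspec x
    have hg := (tendsto_shape (m + q) hε).const_mul ((∑ i, ‖π i‖) * C)
    rw [mul_zero] at hg
    refine squeeze_zero_norm' ?_ hg
    filter_upwards [Filter.eventually_ge_atTop (0 : ℝ)] with z hz0
    have hzz : z ^ m * (1 + z) ^ q ≤ (1 + z) ^ (m + q) := by
      rw [pow_add]
      exact mul_le_mul_of_nonneg_right (pow_le_pow_left₀ hz0 (by linarith) m) (by positivity)
    calc ‖z ^ m * (π ⬝ᵥ (NormedSpace.exp (z • A) *ᵥ x))‖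
        = z ^ m * ‖π ⬝ᵥ (NormedSpace.exp (z • A) *ᵥ x)‖ := by
          rw [norm_mul, Real.norm_of_nonneg (pow_nonneg hz0 m)]
      _ ≤ z ^ m * ((∑ i, ‖π i‖) * (C * (1 + z) ^ q * Real.exp (-(ε * z)))) := by
          refine mul_le_mul_of_nonneg_left ?_ (pow_nonneg hz0 m)
          exact (hdot _).trans (mul_le_mul_of_nonneg_left (hb z hz0) hCπ0)
      _ = (∑ i, ‖π i‖) * C * ((z ^ m * (1 + z) ^ q) * Real.exp (-(ε * z))) := by ring
      _ ≤ (∑ i, ‖π i‖) * C * ((1 + z) ^ (m + q) * Real.exp (-(ε * z))) := by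
          refine mul_le_mul_of_nonneg_left ?_ (by positivity)
          exact mul_le_mul_of_nonneg_right hzz (Real.exp_pos _).le
  have key : ∀ (m : ℕ) (x : Fin p → ℝ),
      ∫ z in Set.Ioi (0 : ℝ), z ^ m * (π ⬝ᵥ (NormedSpace.exp (z • A) *ᵥ x))
        = (m.factorial : ℝ) * (π ⬝ᵥ ((-A)⁻¹ ^ (m + 1) *ᵥ x)) := by
    intro m
    induction m with
    | zero =>
      intro x
      have hder : ∀ z ∈ Set.Ici (0 : ℝ),
          HasDerivAt (fun z : ℝ => π ⬝ᵥ (NormedSpace.exp (z • A) *ᵥ (A⁻¹ *ᵥ x)))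
            (π ⬝ᵥ (NormedSpace.exp (z • A) *ᵥ x)) z := by
        intro z _
        have h := hasDerivAt_dot_exp A π (A⁻¹ *ᵥ x) z
        rwa [hAapply x] at h
      have hint0 : IntegrableOn
          (fun z : ℝ => π ⬝ᵥ (NormedSpace.exp (z • A) *ᵥ x)) (Set.Ioi 0) := by
        have := hInt 0 x
        simpa using this
      have htend0 : Filter.Tendsto
          (fun z : ℝ => π ⬝ᵥ (NormedSpace.exp (z • A) *ᵥ (A⁻¹ *ᵥ x)))
          Filter.atTop (nhds 0) := by
        have := hTend 0 (A⁻¹ *ᵥ x)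
        simpa using this
      have hFTC := integral_Ioi_of_hasDerivAt_of_tendsto' hder hint0 htend0
      simp only [zero_smul, NormedSpace.exp_zero, Matrix.one_mulVec, zero_sub] at hFTC
      calc ∫ z in Set.Ioi (0 : ℝ), z ^ 0 * (π ⬝ᵥ (NormedSpace.exp (z • A) *ᵥ x))
          = ∫ z in Set.Ioi (0 : ℝ), π ⬝ᵥ (NormedSpace.exp (z • A) *ᵥ x) := by
            refine setIntegral_congr_fun measurableSet_Ioi fun z _ => ?_
            rw [pow_zero, one_mul]
        _ = -(π ⬝ᵥ (A⁻¹ *ᵥ x)) := hFTC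
        _ = (Nat.factorial 0 : ℝ) * (π ⬝ᵥ ((-A)⁻¹ ^ (0 + 1) *ᵥ x)) := by
            rw [hneg]
            simp [Matrix.neg_mulVec, dotProduct_neg]
    | succ m ih =>
      intro x
      have hx : A *ᵥ (A⁻¹ *ᵥ x) = x := hAapply x
      have hder : ∀ z ∈ Set.Ici (0 : ℝ),
          HasDerivAt (fun z : ℝ => z ^ (m + 1) * (π ⬝ᵥ (NormedSpace.exp (z • A) *ᵥ (A⁻¹ *ᵥ x))))
            ((m + 1 : ℝ) * z ^ m * (π ⬝ᵥ (NormedSpace.exp (z • A) *ᵥ (A⁻¹ *ᵥ x)))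
              + z ^ (m + 1) * (π ⬝ᵥ (NormedSpace.exp (z • A) *ᵥ x))) z := by
        intro z _
        have h1 := hasDerivAt_pow (m + 1) z
        have h2 := hasDerivAt_dot_exp A π (A⁻¹ *ᵥ x) z
        rw [hx] at h2
        have h3 := h1.fun_mul h2
        simpa [Nat.add_sub_cancel] using h3
      have hisum : IntegrableOn (fun z : ℝ =>
          (m + 1 : ℝ) * z ^ m * (π ⬝ᵥ (NormedSpace.exp (z • A) *ᵥ (A⁻¹ *ᵥ x)))
            + z ^ (m + 1) * (π ⬝ᵥ (NormedSpace.exp (z • A) *ᵥ x))) (Set.Ioi 0) := by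
        refine Integrable.add ?_ (hInt (m + 1) x)
        have h5 := (hInt m (A⁻¹ *ᵥ x)).const_mul (m + 1 : ℝ)
        exact IntegrableOn.congr_fun h5 (fun z _ => by ring) measurableSet_Ioi
      have hFTC := integral_Ioi_of_hasDerivAt_of_tendsto' hder hisum (hTend (m + 1) (A⁻¹ *ᵥ x))
      rw [integral_add (IntegrableOn.congr_fun ((hInt m (A⁻¹ *ᵥ x)).const_mul (m + 1 : ℝ))
        (fun z _ => by ring) measurableSet_Ioi) (hInt (m + 1) x)] at hFTC
      have hz0 : (0 : ℝ) ^ (m + 1) * (π ⬝ᵥ (NormedSpace.exp ((0:ℝ) • A) *ᵥ (A⁻¹ *ᵥ x))) = 0 := by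
        simp
      rw [hz0, zero_sub, neg_zero] at hFTC
      have hpull : ∫ z in Set.Ioi (0 : ℝ),
          (m + 1 : ℝ) * z ^ m * (π ⬝ᵥ (NormedSpace.exp (z • A) *ᵥ (A⁻¹ *ᵥ x)))
          = (m + 1 : ℝ) * ∫ z in Set.Ioi (0 : ℝ),
              z ^ m * (π ⬝ᵥ (NormedSpace.exp (z • A) *ᵥ (A⁻¹ *ᵥ x))) := by
        rw [← integral_const_mul]
        exact setIntegral_congr_fun measurableSet_Ioi fun z _ => by ring
      rw [hpull, ih (A⁻¹ *ᵥ x)] at hFTC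
      have hmain : ∫ z in Set.Ioi (0 : ℝ), z ^ (m + 1) * (π ⬝ᵥ (NormedSpace.exp (z • A) *ᵥ x))
          = -((m + 1 : ℝ) * ((m.factorial : ℝ) * (π ⬝ᵥ ((-A)⁻¹ ^ (m + 1) *ᵥ (A⁻¹ *ᵥ x))))) := by
        linarith [hFTC]
      rw [hmain]
      have hstep : (-A)⁻¹ ^ (m + 1 + 1) *ᵥ x = (-A)⁻¹ ^ (m + 1) *ᵥ (-(A⁻¹ *ᵥ x)) := by
        rw [pow_succ, ← Matrix.mulVec_mulVec, hneg, Matrix.neg_mulVec]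
      rw [hstep]
      rw [Matrix.mulVec_neg, dotProduct_neg]
      rw [Nat.factorial_succ]
      push_cast
      ring
  have hconv : ∀ z : ℝ,
      z ^ n * Real.exp (-(u * z)) * (π ⬝ᵥ (NormedSpace.exp (z • T) *ᵥ t))
        = z ^ n * (π ⬝ᵥ (NormedSpace.exp (z • A) *ᵥ t)) := by
    intro z
    have hsplit : z • A = (-(u * z)) • (1 : Matrix (Fin p) (Fin p) ℝ) + z • T := by
      rw [hA, smul_sub, smul_smul, mul_comm z u, neg_smul]
      abel
    have hcomm : Commute ((-(u * z)) • (1 : Matrix (Fin p) (Fin p) ℝ)) (z • T) :=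
      (Commute.one_left (z • T)).smul_left _
    rw [hsplit, Matrix.exp_add_of_commute _ _ hcomm, exp_scalar_smul_one,
      ← Real.exp_eq_exp_ℝ, smul_mul_assoc, one_mul, Matrix.smul_mulVec,
      dotProduct_smul, smul_eq_mul]
    ring
  calc ∫ z in Set.Ioi (0 : ℝ),
        z ^ n * Real.exp (-(u * z)) * (π ⬝ᵥ (NormedSpace.exp (z • T) *ᵥ t))
      = ∫ z in Set.Ioi (0 : ℝ), z ^ n * (π ⬝ᵥ (NormedSpace.exp (z • A) *ᵥ t)) := by
        exact setIntegral_congr_fun measurableSet_Ioi fun z _ => hconv z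
    _ = (n.factorial : ℝ) * (π ⬝ᵥ ((-A)⁻¹ ^ (n + 1) *ᵥ t)) := key n t
    _ = (n.factorial : ℝ) *
          (π ⬝ᵥ (((u • (1 : Matrix (Fin p) (Fin p) ℝ) - T)⁻¹) ^ (n + 1) *ᵥ t)) := by
        rw [hA, neg_sub]
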